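/- Let D be a coassociative counital coalgebra over a field k. Then: (a) a left D-contramodule is co-Artinian if and only if its underlying left D*-module is Noetherian; (b) a right D-comodule L is Artinian if and only if the dual vector space L* is a Noetherian left D*-module; (c) a right D-comodule L is co-Noetherian provided that L* is a Noetherian left D-contramodule. -/

import Mathlib

open TensorProduct LinearMap

section Contra

variable (k : Type) [Field k]
variable (D : Type) [AddCommGroup D] [Module k D] [Coalgebra k D]

/-- Axioms for a left `D`-contramodule structure given by a contraaction map `π`. -/
structure IsContra {P : Type} [AddCommGroup P] [Module k P]
    (π : (D →ₗ[k] P) →ₗ[k] P) : Prop where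
  contraassoc : ∀ f : D ⊗[k] D →ₗ[k] P,
    π (f ∘ₗ CoalgebraStruct.comul (R := k) (A := D)) = π (π ∘ₗ TensorProduct.curry f)
  contraunit : ∀ p : P,
    π ((CoalgebraStruct.counit (R := k) (A := D)).smulRight p) = p

/-- A `k`-linear map between contramodules is a contramodule morphism. -/
def IsContraHom {P Q : Type} [AddCommGroup P] [Module k P] [AddCommGroup Q] [Module k Q]
    (πP : (D →ₗ[k] P) →ₗ[k] P) (πQ : (D →ₗ[k] Q) →ₗ[k] Q) (f : P →ₗ[k] Q) : Prop :=
  ∀ g : D →ₗ[k] P, f (πP g) = πQ (f ∘ₗ g)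

/-- The contraaction of the free left contramodule `Hom_k(D, V)`. -/
noncomputable def freeContraaction (V : Type) [AddCommGroup V] [Module k V] :
    (D →ₗ[k] (D →ₗ[k] V)) →ₗ[k] (D →ₗ[k] V) :=
  (LinearMap.lcomp k V (CoalgebraStruct.comul (R := k) (A := D))) ∘ₗ
    TensorProduct.uncurry (RingHom.id k) D D V

/-- A contramodule is finitely generated if it is a quotient of a free contramodule
with a finite-dimensional space of generators. -/
def FinGenContra {P : Type} [AddCommGroup P] [Module k P]
    (π : (D →ₗ[k] P) →ₗ[k] P) : Prop :=
  ∃ (V : Type) (_ : AddCommGroup V) (_ : Module k V), FiniteDimensional k V ∧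
    ∃ g : (D →ₗ[k] V) →ₗ[k] P, Function.Surjective g ∧
      IsContraHom k D (freeContraaction k D V) π g

end Contra

section ContraSub

variable (k : Type) [Field k]
variable (D : Type) [AddCommGroup D] [Module k D] [Coalgebra k D]
variable {P : Type} [AddCommGroup P] [Module k P]

/-- A subspace `Q ⊆ P` is a subcontramodule if the contraaction takes every map
`D → P` with values in `Q` into `Q`. -/
def IsSubcontra (π : (D →ₗ[k] P) →ₗ[k] P) (Q : Submodule k P) : Prop :=
  ∀ g : D →ₗ[k] P, LinearMap.range g ≤ Q → π g ∈ Q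

/-- A contraaction `π'` on a subspace `Q ⊆ P` is compatible with the contraaction `π`
on `P` if the inclusion `Q → P` is a morphism of contramodules.  For a subcontramodule
`Q` such a compatible contraaction exists and is unique; it is the canonical
contramodule structure of the subcontramodule. -/
def CompatibleSubContraaction (π : (D →ₗ[k] P) →ₗ[k] P) (Q : Submodule k P)
    (π' : (D →ₗ[k] ↥Q) →ₗ[k] ↥Q) : Prop :=
  ∀ g : D →ₗ[k] ↥Q, (π' g : P) = π (Q.subtype ∘ₗ g)

/-- A contramodule is Noetherian if all its subcontramodules are finitely
generated (as contramodules, with their canonical induced structure). -/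
def NoetherianContra (π : (D →ₗ[k] P) →ₗ[k] P) : Prop :=
  ∀ Q : Submodule k P, IsSubcontra k D π Q →
    ∃ π' : (D →ₗ[k] ↥Q) →ₗ[k] ↥Q,
      CompatibleSubContraaction k D π Q π' ∧ FinGenContra k D π'

/-- A contramodule is co-Artinian if every ascending chain of its subcontramodules
terminates. -/
def CoArtinianContra (π : (D →ₗ[k] P) →ₗ[k] P) : Prop :=
  ∀ f : ℕ → Submodule k P, (∀ n, IsSubcontra k D π (f n)) →
    (∀ n, f n ≤ f (n + 1)) → ∃ n, ∀ m, n ≤ m → f m = f n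

end ContraSub

open TensorProduct LinearMap

section RightComod

variable (k : Type) [Field k]
variable (D : Type) [AddCommGroup D] [Module k D] [Coalgebra k D]

/-- Axioms for a right `D`-comodule structure given by a coaction map `ρ`. -/
structure IsRightComod {N : Type} [AddCommGroup N] [Module k N]
    (ρ : N →ₗ[k] N ⊗[k] D) : Prop where
  coassoc : ∀ n : N, (TensorProduct.assoc k N D D) (ρ.rTensor D (ρ n)) =
      (CoalgebraStruct.comul (R := k) (A := D)).lTensor N (ρ n)
  counit : ∀ n : N, (TensorProduct.rid k N)
      ((CoalgebraStruct.counit (R := k) (A := D)).lTensor N (ρ n)) = n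

/-- Morphisms of right `D`-comodules. -/
def IsRightComodHom {N N' : Type} [AddCommGroup N] [Module k N]
    [AddCommGroup N'] [Module k N']
    (ρN : N →ₗ[k] N ⊗[k] D) (ρN' : N' →ₗ[k] N' ⊗[k] D) (f : N →ₗ[k] N') : Prop :=
  f.rTensor D ∘ₗ ρN = ρN' ∘ₗ f

/-- The coaction of the cofree right comodule `V ⊗ D`. -/
noncomputable def cofreeRightCoaction (V : Type) [AddCommGroup V] [Module k V] :
    V ⊗[k] D →ₗ[k] (V ⊗[k] D) ⊗[k] D :=
  (TensorProduct.assoc k V D D).symm.toLinearMap ∘ₗ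
    (CoalgebraStruct.comul (R := k) (A := D)).lTensor V

/-- A right comodule is finitely cogenerated if it admits an injective comodule
morphism into a cofree right comodule with finite-dimensional cogenerators. -/
def FinCogenRight {N : Type} [AddCommGroup N] [Module k N]
    (ρ : N →ₗ[k] N ⊗[k] D) : Prop :=
  ∃ (V : Type) (_ : AddCommGroup V) (_ : Module k V), FiniteDimensional k V ∧
    ∃ f : N →ₗ[k] V ⊗[k] D, Function.Injective f ∧
      IsRightComodHom k D ρ (cofreeRightCoaction k D V) f

/-- A right comodule is finitely copresented if it is (isomorphic to) the kernel of a
morphism of finitely cogenerated cofree right comodules. -/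
def FinCopresRight {N : Type} [AddCommGroup N] [Module k N]
    (ρ : N →ₗ[k] N ⊗[k] D) : Prop :=
  ∃ (V : Type) (_ : AddCommGroup V) (_ : Module k V)
    (W : Type) (_ : AddCommGroup W) (_ : Module k W),
    FiniteDimensional k V ∧ FiniteDimensional k W ∧
    ∃ g : V ⊗[k] D →ₗ[k] W ⊗[k] D,
      IsRightComodHom k D (cofreeRightCoaction k D V) (cofreeRightCoaction k D W) g ∧
      ∃ e : N →ₗ[k] V ⊗[k] D, Function.Injective e ∧
        IsRightComodHom k D ρ (cofreeRightCoaction k D V) e ∧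
        LinearMap.range e = LinearMap.ker g

/-- The canonical left `D`-contraaction on the dual vector space `N* = Hom_k(N, k)`
of a right `D`-comodule `N`. -/
noncomputable def dualContraaction {N : Type} [AddCommGroup N] [Module k N]
    (ρ : N →ₗ[k] N ⊗[k] D) :
    (D →ₗ[k] (N →ₗ[k] k)) →ₗ[k] (N →ₗ[k] k) :=
  (LinearMap.lcomp k k ρ) ∘ₗ (TensorProduct.uncurry (RingHom.id k) N D k) ∘ₗ
    (LinearMap.lflip (R₀ := k)).toLinearMap

/-- The dualization map on morphisms, `φ ↦ φ* = Hom_k(φ, k)`. -/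
noncomputable def dualizationMap {N N' : Type} [AddCommGroup N] [Module k N]
    [AddCommGroup N'] [Module k N'] (φ : N →ₗ[k] N') :
    (N' →ₗ[k] k) →ₗ[k] (N →ₗ[k] k) :=
  LinearMap.lcomp k k φ

end RightComod

open TensorProduct LinearMap

section DAct

variable (k : Type) [Field k]
variable (D : Type) [AddCommGroup D] [Module k D] [Coalgebra k D]

/-- The underlying left `D* = Hom_k(D,k)`-module structure of a left `D`-contramodule:
the action of a linear functional `f : D → k` on `p` is `π(d ↦ f(d)·p)`. -/
noncomputable def dAction {P : Type} [AddCommGroup P] [Module k P]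
    (π : (D →ₗ[k] P) →ₗ[k] P) (f : D →ₗ[k] k) (p : P) : P :=
  π (f.smulRight p)

end DAct

section RSub
variable (k : Type) [Field k]
variable (D : Type) [AddCommGroup D] [Module k D] [Coalgebra k D]
variable {N : Type} [AddCommGroup N] [Module k N]

/-- A subspace of a right comodule is a subcomodule if the coaction takes it into the
image of `N' ⊗ D`. -/
def IsSubcomodRight (ρ : N →ₗ[k] N ⊗[k] D) (N' : Submodule k N) : Prop :=
  ∀ n ∈ N', ρ n ∈ LinearMap.range (N'.subtype.rTensor D)

/-- The quotient right comodule `N/N'` is finitely cogenerated. -/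
def QuotFinCogenRight (ρ : N →ₗ[k] N ⊗[k] D) (N' : Submodule k N) : Prop :=
  ∃ (V : Type) (_ : AddCommGroup V) (_ : Module k V), FiniteDimensional k V ∧
    ∃ g : N →ₗ[k] V ⊗[k] D, IsRightComodHom k D ρ (cofreeRightCoaction k D V) g ∧
      LinearMap.ker g = N'

/-- A right comodule is co-Noetherian if all its quotient comodules are finitely
cogenerated. -/
def CoNoetherianRight (ρ : N →ₗ[k] N ⊗[k] D) : Prop :=
  ∀ N' : Submodule k N, IsSubcomodRight k D ρ N' → QuotFinCogenRight k D ρ N'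

/-- A right comodule is Artinian if every descending chain of subcomodules
terminates. -/
def ArtinianRight (ρ : N →ₗ[k] N ⊗[k] D) : Prop :=
  ∀ f : ℕ → Submodule k N, (∀ n, IsSubcomodRight k D ρ (f n)) →
    (∀ n, f (n + 1) ≤ f n) → ∃ n, ∀ m, n ≤ m → f m = f n

end RSub

section DModNoeth
variable (k : Type) [Field k]
variable (D : Type) [AddCommGroup D] [Module k D] [Coalgebra k D]
variable {P : Type} [AddCommGroup P] [Module k P]

/-- A subspace of (the underlying `D*`-module of) a contramodule is a `D*`-submodule
if it is closed under the `D*`-action. -/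
def IsDStarSubmodule (π : (D →ₗ[k] P) →ₗ[k] P) (Q : Submodule k P) : Prop :=
  ∀ f : D →ₗ[k] k, ∀ p ∈ Q, dAction k D π f p ∈ Q

/-- A `D*`-submodule `Q` is finitely generated over `D*` if it is the smallest
`D*`-submodule containing some finite set. -/
def FGDStarSubmodule (π : (D →ₗ[k] P) →ₗ[k] P) (Q : Submodule k P) : Prop :=
  ∃ s : Finset P, (↑s : Set P) ⊆ Q ∧
    ∀ Q' : Submodule k P, IsDStarSubmodule k D π Q' → (↑s : Set P) ⊆ Q' → Q ≤ Q'

/-- The underlying `D*`-module (of a contramodule with contraaction `π`) is Noetherian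
if all its `D*`-submodules are finitely generated. -/
def NoetherianDStarModule (π : (D →ₗ[k] P) →ₗ[k] P) : Prop :=
  ∀ Q : Submodule k P, IsDStarSubmodule k D π Q → FGDStarSubmodule k D π Q

end DModNoeth


set_option linter.unusedSectionVars false

section Aux1

variable (k : Type) [Field k]
variable (D : Type) [AddCommGroup D] [Module k D] [Coalgebra k D]

/-- `p ↦ (f ↦ f.smulRight p)` as a linear map in `f`. -/
noncomputable def smulRightL {P : Type} [AddCommGroup P] [Module k P] (p : P) :
    (D →ₗ[k] k) →ₗ[k] (D →ₗ[k] P) where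
  toFun f := f.smulRight p
  map_add' f g := by ext d; simp [add_smul]
  map_smul' c f := by ext d; simp [mul_smul]

@[simp] lemma smulRightL_apply {P : Type} [AddCommGroup P] [Module k P] (p : P)
    (f : D →ₗ[k] k) : smulRightL k D p f = f.smulRight p := rfl

lemma dAction_def {P : Type} [AddCommGroup P] [Module k P]
    (π : (D →ₗ[k] P) →ₗ[k] P) (f : D →ₗ[k] k) (p : P) :
    dAction k D π f p = π (f.smulRight p) := rfl

lemma dAction_add {P : Type} [AddCommGroup P] [Module k P]
    (π : (D →ₗ[k] P) →ₗ[k] P) (f : D →ₗ[k] k) (p q : P) :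
    dAction k D π f (p + q) = dAction k D π f p + dAction k D π f q := by
  rw [dAction_def, dAction_def, dAction_def, ← map_add]
  congr 1
  ext d; simp [smul_add]

/-- The cyclic `D*`-submodule generated by `p`. -/
noncomputable def dspan {P : Type} [AddCommGroup P] [Module k P]
    (π : (D →ₗ[k] P) →ₗ[k] P) (p : P) : Submodule k P :=
  LinearMap.range (π ∘ₗ smulRightL k D p)

lemma mem_dspan_iff {P : Type} [AddCommGroup P] [Module k P]
    (π : (D →ₗ[k] P) →ₗ[k] P) (p x : P) :
    x ∈ dspan k D π p ↔ ∃ f : D →ₗ[k] k, dAction k D π f p = x := by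
  constructor
  · rintro ⟨f, rfl⟩; exact ⟨f, rfl⟩
  · rintro ⟨f, rfl⟩; exact ⟨f, rfl⟩

lemma dAction_mem_dspan {P : Type} [AddCommGroup P] [Module k P]
    (π : (D →ₗ[k] P) →ₗ[k] P) (p : P) (f : D →ₗ[k] k) :
    dAction k D π f p ∈ dspan k D π p := ⟨f, rfl⟩

lemma dspan_le {P : Type} [AddCommGroup P] [Module k P]
    (π : (D →ₗ[k] P) →ₗ[k] P) (p : P) (Q' : Submodule k P)
    (hQ' : IsDStarSubmodule k D π Q') (hp : p ∈ Q') :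
    dspan k D π p ≤ Q' := by
  rintro x ⟨f, rfl⟩
  exact hQ' f p hp

/-- Finite `D*`-span of a finite set. -/
noncomputable def spanD {P : Type} [AddCommGroup P] [Module k P]
    (π : (D →ₗ[k] P) →ₗ[k] P) (s : Finset P) : Submodule k P :=
  s.sup (fun p => dspan k D π p)

lemma spanD_le {P : Type} [AddCommGroup P] [Module k P]
    (π : (D →ₗ[k] P) →ₗ[k] P) (s : Finset P) (Q' : Submodule k P)
    (hQ' : IsDStarSubmodule k D π Q') (hs : (↑s : Set P) ⊆ Q') :
    spanD k D π s ≤ Q' :=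
  Finset.sup_le fun p hp => dspan_le k D π p Q' hQ' (hs hp)

lemma spanD_mono {P : Type} [AddCommGroup P] [Module k P]
    (π : (D →ₗ[k] P) →ₗ[k] P) {s t : Finset P} (h : s ⊆ t) :
    spanD k D π s ≤ spanD k D π t :=
  Finset.sup_mono h

lemma subset_spanD {P : Type} [AddCommGroup P] [Module k P]
    (π : (D →ₗ[k] P) →ₗ[k] P)
    (hunit : ∀ p : P, π ((CoalgebraStruct.counit (R := k) (A := D)).smulRight p) = p)
    (s : Finset P) : (↑s : Set P) ⊆ spanD k D π s := by
  intro p hp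
  have h1 : p ∈ dspan k D π p := by
    refine (mem_dspan_iff k D π p p).2 ⟨CoalgebraStruct.counit, ?_⟩
    exact hunit p
  exact Finset.le_sup (f := fun p => dspan k D π p) hp h1

/-- Subcontramodules are `D*`-submodules. -/
lemma isDStar_of_isSubcontra {P : Type} [AddCommGroup P] [Module k P]
    (π : (D →ₗ[k] P) →ₗ[k] P) (Q : Submodule k P)
    (hQ : IsSubcontra k D π Q) : IsDStarSubmodule k D π Q := by
  intro f p hp
  refine hQ (f.smulRight p) ?_
  rintro x ⟨d, rfl⟩
  exact Q.smul_mem _ hp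

lemma isDStar_sup {P : Type} [AddCommGroup P] [Module k P]
    (π : (D →ₗ[k] P) →ₗ[k] P) {Q₁ Q₂ : Submodule k P}
    (h₁ : IsDStarSubmodule k D π Q₁) (h₂ : IsDStarSubmodule k D π Q₂) :
    IsDStarSubmodule k D π (Q₁ ⊔ Q₂) := by
  intro f p hp
  rcases Submodule.mem_sup.1 hp with ⟨a, ha, b, hb, rfl⟩
  rw [dAction_add]
  exact Submodule.mem_sup.2 ⟨_, h₁ f a ha, _, h₂ f b hb, rfl⟩

lemma isDStar_bot {P : Type} [AddCommGroup P] [Module k P]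
    (π : (D →ₗ[k] P) →ₗ[k] P) : IsDStarSubmodule k D π (⊥ : Submodule k P) := by
  intro f p hp
  rw [Submodule.mem_bot] at hp
  subst hp
  have : (f.smulRight (0 : P)) = 0 := by ext d; simp
  simp [dAction_def, this]

lemma isDStar_spanD {P : Type} [AddCommGroup P] [Module k P]
    (π : (D →ₗ[k] P) →ₗ[k] P)
    (hd : ∀ p : P, IsDStarSubmodule k D π (dspan k D π p)) (s : Finset P) :
    IsDStarSubmodule k D π (spanD k D π s) := by
  classical
  induction s using Finset.induction_on with
  | empty => simpa [spanD] using isDStar_bot k D π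
  | insert a t hx ih =>
      simpa [spanD, Finset.sup_insert] using isDStar_sup k D π (hd a) ih

/-- If `Q` is not finitely generated, then beyond each finite subset there is a
new element not in its `D*`-span. -/
lemma exists_new_of_not_fg {P : Type} [AddCommGroup P] [Module k P]
    (π : (D →ₗ[k] P) →ₗ[k] P) (Q : Submodule k P)
    (hnfg : ¬ FGDStarSubmodule k D π Q) (s : Finset P) (hs : (↑s : Set P) ⊆ Q) :
    ∃ p, p ∈ Q ∧ p ∉ spanD k D π s := by
  by_contra h
  push_neg at h
  refine hnfg ⟨s, hs, fun Q' hQ' hsQ' => ?_⟩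
  intro x hx
  exact spanD_le k D π s Q' hQ' hsQ' (h x hx)

/-- Construction of an increasing chain of finite subsets of a non-f.g. `Q`. -/
lemma chain_of_not_fg {P : Type} [AddCommGroup P] [Module k P]
    (π : (D →ₗ[k] P) →ₗ[k] P) (Q : Submodule k P)
    (hnfg : ¬ FGDStarSubmodule k D π Q) :
    ∃ g : ℕ → Finset P, (∀ n, (↑(g n) : Set P) ⊆ Q) ∧ (∀ n, g n ⊆ g (n + 1)) ∧
      (∀ n, ∃ p ∈ g (n + 1), p ∉ spanD k D π (g n)) := by
  classical
  have H := exists_new_of_not_fg k D π Q hnfg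
  let next : {s : Finset P // (↑s : Set P) ⊆ Q} → {s : Finset P // (↑s : Set P) ⊆ Q} :=
    fun s => ⟨insert (H s.1 s.2).choose s.1, by
      rw [Finset.coe_insert]
      exact Set.insert_subset (H s.1 s.2).choose_spec.1 s.2⟩
  let g0 : {s : Finset P // (↑s : Set P) ⊆ Q} := ⟨∅, by simp⟩
  refine ⟨fun n => (next^[n] g0).1, fun n => (next^[n] g0).2, fun n => ?_, fun n => ?_⟩
  · show (next^[n] g0).1 ⊆ (next^[n+1] g0).1
    rw [Function.iterate_succ_apply']
    exact Finset.subset_insert _ _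
  · show ∃ p ∈ (next^[n+1] g0).1, p ∉ spanD k D π (next^[n] g0).1
    rw [Function.iterate_succ_apply']
    exact ⟨(H (next^[n] g0).1 (next^[n] g0).2).choose, Finset.mem_insert_self _ _,
      (H (next^[n] g0).1 (next^[n] g0).2).choose_spec.2⟩

end Aux1


section Aux2

variable (k : Type) [Field k]
variable (D : Type) [AddCommGroup D] [Module k D] [Coalgebra k D]

/-- Lifting a linear map along a surjection (vector spaces are projective). -/
lemma exists_lift_of_range_le {A B P : Type} [AddCommGroup A] [Module k A]
    [AddCommGroup B] [Module k B] [AddCommGroup P] [Module k P]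
    (φ : A →ₗ[k] P) (g : B →ₗ[k] P) (h : LinearMap.range g ≤ LinearMap.range φ) :
    ∃ gg : B →ₗ[k] A, φ ∘ₗ gg = g := by
  have hsurj : Function.Surjective φ.rangeRestrict := φ.surjective_rangeRestrict
  have g' : B →ₗ[k] LinearMap.range φ :=
    g.codRestrict (LinearMap.range φ) (fun b => h ⟨b, rfl⟩)
  obtain ⟨gg, hgg⟩ := Module.projective_lifting_property φ.rangeRestrict
    (g.codRestrict (LinearMap.range φ) (fun b => h ⟨b, rfl⟩)) hsurj
  refine ⟨gg, ?_⟩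
  ext b
  have hb := congrArg Subtype.val (LinearMap.congr_fun hgg b)
  simpa using hb

/-- The range of a morphism of contramodules is a subcontramodule. -/
lemma isSubcontra_range {F P : Type} [AddCommGroup F] [Module k F]
    [AddCommGroup P] [Module k P]
    (πF : (D →ₗ[k] F) →ₗ[k] F) (π : (D →ₗ[k] P) →ₗ[k] P)
    (φ : F →ₗ[k] P) (hφ : IsContraHom k D πF π φ) :
    IsSubcontra k D π (LinearMap.range φ) := by
  intro g hg
  obtain ⟨gg, rfl⟩ := exists_lift_of_range_le k φ g hg
  rw [← hφ gg]
  exact ⟨πF gg, rfl⟩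

lemma isSubcontra_bot {P : Type} [AddCommGroup P] [Module k P]
    (π : (D →ₗ[k] P) →ₗ[k] P) : IsSubcontra k D π (⊥ : Submodule k P) := by
  intro g hg
  have : g = 0 := by
    ext d; simpa using hg ⟨d, rfl⟩
  simp [this]

lemma isSubcontra_sup {P : Type} [AddCommGroup P] [Module k P]
    (π : (D →ₗ[k] P) →ₗ[k] P) {Q₁ Q₂ : Submodule k P}
    (h₁ : IsSubcontra k D π Q₁) (h₂ : IsSubcontra k D π Q₂) :
    IsSubcontra k D π (Q₁ ⊔ Q₂) := by
  intro g hg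
  set u : (Q₁ × Q₂) →ₗ[k] P :=
    Q₁.subtype ∘ₗ LinearMap.fst k Q₁ Q₂ + Q₂.subtype ∘ₗ LinearMap.snd k Q₁ Q₂ with hu
  have hrange : LinearMap.range u = Q₁ ⊔ Q₂ := by
    apply le_antisymm
    · rintro x ⟨⟨a, b⟩, rfl⟩
      exact Submodule.mem_sup.2 ⟨a, a.2, b, b.2, rfl⟩
    · intro x hx
      rcases Submodule.mem_sup.1 hx with ⟨a, ha, b, hb, rfl⟩
      exact ⟨(⟨a, ha⟩, ⟨b, hb⟩), rfl⟩
  obtain ⟨gg, rfl⟩ := exists_lift_of_range_le k u g (by rw [hrange]; exact hg)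
  have hdecomp : u ∘ₗ gg =
      Q₁.subtype ∘ₗ (LinearMap.fst k Q₁ Q₂ ∘ₗ gg) + Q₂.subtype ∘ₗ (LinearMap.snd k Q₁ Q₂ ∘ₗ gg) := by
    rw [hu]; ext d; simp
  rw [hdecomp, map_add]
  have m1 : π (Q₁.subtype ∘ₗ (LinearMap.fst k Q₁ Q₂ ∘ₗ gg)) ∈ Q₁ := by
    apply h₁
    rintro x ⟨d, rfl⟩
    simp
  have m2 : π (Q₂.subtype ∘ₗ (LinearMap.snd k Q₁ Q₂ ∘ₗ gg)) ∈ Q₂ := by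
    apply h₂
    rintro x ⟨d, rfl⟩
    simp
  exact Submodule.mem_sup.2 ⟨_, m1, _, m2, rfl⟩

/-- `φ_p : D* → P`, `f ↦ π (f.smulRight p)` is a contramodule morphism from the
free contramodule `Hom(D, k)`. -/
lemma isContraHom_phi {P : Type} [AddCommGroup P] [Module k P]
    (π : (D →ₗ[k] P) →ₗ[k] P) (hπ : IsContra k D π) (p : P) :
    IsContraHom k D (freeContraaction k D k) π (π ∘ₗ smulRightL k D p) := by
  intro g
  have h1 : freeContraaction k D k g =
      (TensorProduct.uncurry (RingHom.id k) D D k g) ∘ₗ CoalgebraStruct.comul (R := k) (A := D) := rfl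
  have h2 : ((TensorProduct.uncurry (RingHom.id k) D D k g) ∘ₗ
      CoalgebraStruct.comul (R := k) (A := D)).smulRight p =
      ((TensorProduct.uncurry (RingHom.id k) D D k g).smulRight p) ∘ₗ
        CoalgebraStruct.comul (R := k) (A := D) := by
    ext d; simp
  have h3 := hπ.contraassoc ((TensorProduct.uncurry (RingHom.id k) D D k g).smulRight p)
  have h4 : π ∘ₗ TensorProduct.curry ((TensorProduct.uncurry (RingHom.id k) D D k g).smulRight p) =
      (π ∘ₗ smulRightL k D p) ∘ₗ g := by
    ext d
    simp only [LinearMap.comp_apply, smulRightL_apply]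
    congr 1
  show π ((freeContraaction k D k g).smulRight p) = π ((π ∘ₗ smulRightL k D p) ∘ₗ g)
  rw [h1, h2, h3, h4]

lemma isSubcontra_dspan {P : Type} [AddCommGroup P] [Module k P]
    (π : (D →ₗ[k] P) →ₗ[k] P) (hπ : IsContra k D π) (p : P) :
    IsSubcontra k D π (dspan k D π p) :=
  isSubcontra_range k D (freeContraaction k D k) π _ (isContraHom_phi k D π hπ p)

lemma isSubcontra_spanD {P : Type} [AddCommGroup P] [Module k P]
    (π : (D →ₗ[k] P) →ₗ[k] P) (hπ : IsContra k D π) (s : Finset P) :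
    IsSubcontra k D π (spanD k D π s) := by
  classical
  induction s using Finset.induction_on with
  | empty => simpa [spanD] using isSubcontra_bot k D π
  | insert a t hx ih =>
      simpa [spanD, Finset.sup_insert] using
        isSubcontra_sup k D π (isSubcontra_dspan k D π hπ a) ih

/-- Finitely many elements of a directed union lie in one member. -/
lemma finset_subset_chain {P : Type} [AddCommGroup P] [Module k P]
    (f : ℕ → Submodule k P) (hmono : Monotone f) (s : Finset P)
    (hs : ∀ p ∈ s, ∃ n, p ∈ f n) : ∃ N, (↑s : Set P) ⊆ f N := by
  classical
  induction s using Finset.induction_on with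
  | empty => exact ⟨0, by simp⟩
  | insert a t hx ih =>
      obtain ⟨N₁, hN₁⟩ := ih (fun p hp => hs p (Finset.mem_insert_of_mem hp))
      obtain ⟨N₂, hN₂⟩ := hs a (Finset.mem_insert_self a t)
      refine ⟨max N₁ N₂, ?_⟩
      rw [Finset.coe_insert]
      exact Set.insert_subset (hmono (le_max_right N₁ N₂) hN₂)
        (fun p hp => hmono (le_max_left N₁ N₂) (hN₁ hp))

/-- Part (a), ⇐ : Noetherian `D*`-module implies co-Artinian contramodule. -/
lemma coArtinian_of_noeth {P : Type} [AddCommGroup P] [Module k P]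
    (π : (D →ₗ[k] P) →ₗ[k] P)
    (hN : NoetherianDStarModule k D π) : CoArtinianContra k D π := by
  intro f hsub hmono'
  have hmono : Monotone f := monotone_nat_of_le_succ hmono'
  have hdir : Directed (· ≤ ·) f := hmono.directed_le
  have hmem : ∀ x, x ∈ (⨆ n, f n) ↔ ∃ n, x ∈ f n :=
    fun x => Submodule.mem_iSup_of_directed f hdir
  have hDsup : IsDStarSubmodule k D π (⨆ n, f n) := by
    intro g p hp
    obtain ⟨n, hn⟩ := (hmem p).1 hp
    exact (hmem _).2 ⟨n, isDStar_of_isSubcontra k D π (f n) (hsub n) g p hn⟩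
  obtain ⟨s, hsQ, hmin⟩ := hN _ hDsup
  obtain ⟨N, hsN⟩ := finset_subset_chain k f hmono s (fun p hp => (hmem p).1 (hsQ hp))
  refine ⟨N, fun m hm => le_antisymm ?_ (hmono hm)⟩
  calc f m ≤ ⨆ n, f n := le_iSup f m
    _ ≤ f N := hmin (f N) (isDStar_of_isSubcontra k D π (f N) (hsub N)) hsN

/-- Part (a), ⇒ : co-Artinian contramodule has Noetherian underlying `D*`-module. -/
lemma noeth_of_coArtinian {P : Type} [AddCommGroup P] [Module k P]
    (π : (D →ₗ[k] P) →ₗ[k] P) (hπ : IsContra k D π)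
    (hA : CoArtinianContra k D π) : NoetherianDStarModule k D π := by
  intro Q hQ
  by_contra hnfg
  obtain ⟨g, hgQ, hgmono, hgnew⟩ := chain_of_not_fg k D π Q hnfg
  have hchain : ∀ n, spanD k D π (g n) ≤ spanD k D π (g (n + 1)) :=
    fun n => spanD_mono k D π (hgmono n)
  obtain ⟨n, hn⟩ := hA (fun n => spanD k D π (g n))
    (fun n => isSubcontra_spanD k D π hπ (g n)) hchain
  obtain ⟨p, hp1, hp2⟩ := hgnew n
  apply hp2
  rw [← hn (n + 1) (Nat.le_succ n)]
  exact subset_spanD k D π hπ.contraunit (g (n + 1)) hp1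

end Aux2


section Aux3

variable (k : Type) [Field k]
variable (D : Type) [AddCommGroup D] [Module k D] [Coalgebra k D]

/-- Contraction of the right tensor factor with a functional. -/
noncomputable def ctr {M N : Type} [AddCommGroup M] [Module k M]
    [AddCommGroup N] [Module k N] (f : N →ₗ[k] k) : M ⊗[k] N →ₗ[k] M :=
  (TensorProduct.rid k M).toLinearMap ∘ₗ (f.lTensor M)

@[simp] lemma ctr_tmul {M N : Type} [AddCommGroup M] [Module k M]
    [AddCommGroup N] [Module k N] (f : N →ₗ[k] k) (x : M) (t : N) :
    ctr k f (x ⊗ₜ[k] t) = f t • x := by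
  simp [ctr]

lemma ctr_naturality {M M' N : Type} [AddCommGroup M] [Module k M]
    [AddCommGroup M'] [Module k M'] [AddCommGroup N] [Module k N]
    (φ : M →ₗ[k] M') (f : N →ₗ[k] k) :
    ctr k f ∘ₗ (φ.rTensor N) = φ ∘ₗ (ctr k f : M ⊗[k] N →ₗ[k] M) := by
  apply TensorProduct.ext'
  intro x t
  simp

lemma eq_zero_of_ctr {M : Type} [AddCommGroup M] [Module k M]
    (t : M ⊗[k] D) (h : ∀ f : D →ₗ[k] k, ctr k f t = 0) : t = 0 := by
  classical
  set b := Module.Basis.ofVectorSpace k D with hb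
  set e1 : M ⊗[k] D ≃ₗ[k] M ⊗[k] (_ →₀ k) := LinearEquiv.lTensor M b.repr with he1
  have key : ∀ i, TensorProduct.finsuppScalarRight k k M _ (e1 t) i = 0 := by
    intro i
    rw [TensorProduct.finsuppScalarRight_apply, TensorProduct.AlgebraTensorModule.rid_eq_rid]
    have hmap : (TensorProduct.rid k M).toLinearMap ∘ₗ ((Finsupp.lapply i).lTensor M) ∘ₗ
        e1.toLinearMap = ctr k ((Finsupp.lapply i) ∘ₗ (b.repr : D →ₗ[k] _)) := by
      apply TensorProduct.ext'
      intro x d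
      simp [he1, ctr]
    have := LinearMap.congr_fun hmap t
    simp only [LinearMap.comp_apply, LinearEquiv.coe_coe] at this
    rw [this, h]
  have : TensorProduct.finsuppScalarRight k k M _ (e1 t) = 0 := by
    ext i; exact key i
  have h1 : e1 t = 0 := by
    apply (TensorProduct.finsuppScalarRight k k M _).injective
    simpa using this
  simpa using congrArg e1.symm h1

lemma ctr_mem_of_mem_range {M : Type} [AddCommGroup M] [Module k M]
    (K : Submodule k M) (t : M ⊗[k] D)
    (ht : t ∈ LinearMap.range (K.subtype.rTensor D)) (f : D →ₗ[k] k) :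
    ctr k f t ∈ K := by
  obtain ⟨u, rfl⟩ := ht
  have := LinearMap.congr_fun (ctr_naturality k K.subtype f) u
  simp only [LinearMap.comp_apply] at this
  rw [this]
  exact (ctr k f u).2

lemma mem_range_rTensor_of_ctr {M : Type} [AddCommGroup M] [Module k M]
    (K : Submodule k M) (t : M ⊗[k] D)
    (h : ∀ f : D →ₗ[k] k, ctr k f t ∈ K) :
    t ∈ LinearMap.range (K.subtype.rTensor D) := by
  rw [← rTensor_mkQ]
  show (K.mkQ).rTensor D t = 0
  apply eq_zero_of_ctr
  intro f
  have := LinearMap.congr_fun (ctr_naturality k K.mkQ f) t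
  simp only [LinearMap.comp_apply] at this
  rw [this, Submodule.mkQ_apply, Submodule.Quotient.mk_eq_zero]
  exact h f

end Aux3

section Aux4

variable (k : Type) [Field k]
variable (D : Type) [AddCommGroup D] [Module k D] [Coalgebra k D]
variable {L : Type} [AddCommGroup L] [Module k L] (ρ : L →ₗ[k] L ⊗[k] D)

lemma dualContraaction_eq (g : D →ₗ[k] (L →ₗ[k] k)) :
    dualContraaction k D ρ g = (TensorProduct.uncurry (RingHom.id k) L D k g.flip) ∘ₗ ρ := rfl

lemma dAction_dual (f : D →ₗ[k] k) (q : L →ₗ[k] k) :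
    dAction k D (dualContraaction k D ρ) f q = q ∘ₗ (ctr k f) ∘ₗ ρ := by
  have E : TensorProduct.uncurry (RingHom.id k) L D k (((f.smulRight q)).flip) = q ∘ₗ (ctr k f) := by
    apply TensorProduct.ext'
    intro x d
    simp [mul_comm]
  ext x
  rw [dAction_def, dualContraaction_eq]
  show (TensorProduct.uncurry (RingHom.id k) L D k ((f.smulRight q)).flip) (ρ x) = _
  rw [E]
  rfl

lemma dAction_dual_apply (f : D →ₗ[k] k) (q : L →ₗ[k] k) (x : L) :
    dAction k D (dualContraaction k D ρ) f q x = q (ctr k f (ρ x)) := by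
  rw [dAction_dual]; rfl

/-- Counit acts as identity on the dual contramodule. -/
lemma dAction_dual_counit (hρ : IsRightComod k D ρ) (q : L →ₗ[k] k) :
    dAction k D (dualContraaction k D ρ) (CoalgebraStruct.counit (R := k) (A := D)) q = q := by
  ext x
  rw [dAction_dual_apply]
  congr 1
  exact hρ.counit x

/-- The dual annihilator of a subcomodule is a `D*`-submodule of the dual. -/
lemma isDStar_dualAnnihilator {N' : Submodule k L} (hN' : IsSubcomodRight k D ρ N') :
    IsDStarSubmodule k D (dualContraaction k D ρ) (N'.dualAnnihilator) := by
  intro f q hq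
  rw [Submodule.mem_dualAnnihilator] at hq ⊢
  intro x hx
  rw [dAction_dual_apply]
  exact hq _ (ctr_mem_of_mem_range k D N' (ρ x) (hN' x hx) f)

/-- The dual annihilator of a subcomodule is a subcontramodule of the dual. -/
lemma isSubcontra_dualAnnihilator {N' : Submodule k L} (hN' : IsSubcomodRight k D ρ N') :
    IsSubcontra k D (dualContraaction k D ρ) (N'.dualAnnihilator) := by
  intro g hg
  rw [Submodule.mem_dualAnnihilator]
  intro x hx
  obtain ⟨u, hu⟩ := hN' x hx
  rw [dualContraaction_eq]
  show (TensorProduct.uncurry (RingHom.id k) L D k g.flip) (ρ x) = 0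
  rw [← hu]
  have : (TensorProduct.uncurry (RingHom.id k) L D k g.flip) ∘ₗ (N'.subtype.rTensor D) = 0 := by
    apply TensorProduct.ext'
    intro x' d
    have : g d ∈ N'.dualAnnihilator := hg ⟨d, rfl⟩
    rw [Submodule.mem_dualAnnihilator] at this
    simpa using this x'.1 x'.2
  exact LinearMap.congr_fun this u

/-- The coannihilator of a `D*`-submodule of the dual is a subcomodule. -/
lemma isSubcomod_dualCoannihilator {Q : Submodule k (L →ₗ[k] k)}
    (hQ : IsDStarSubmodule k D (dualContraaction k D ρ) Q) :
    IsSubcomodRight k D ρ (Q.dualCoannihilator) := by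
  intro x hx
  apply mem_range_rTensor_of_ctr
  intro f
  rw [Submodule.mem_dualCoannihilator] at hx ⊢
  intro q hq
  have h1 : dAction k D (dualContraaction k D ρ) f q ∈ Q := hQ f q hq
  have h2 := hx _ h1
  rw [dAction_dual_apply] at h2
  exact h2

end Aux4


section Aux5

variable (k : Type) [Field k]
variable (D : Type) [AddCommGroup D] [Module k D] [Coalgebra k D]
variable {L : Type} [AddCommGroup L] [Module k L] (ρ : L →ₗ[k] L ⊗[k] D)

/-- Convolution of two functionals on `D`. -/
noncomputable def convD (g f : D →ₗ[k] k) : D →ₗ[k] k :=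
  (TensorProduct.lift (g.smulRight f)) ∘ₗ CoalgebraStruct.comul (R := k) (A := D)

lemma dAction_dual_dAction (hρ : IsRightComod k D ρ) (f g : D →ₗ[k] k) (q : L →ₗ[k] k) :
    dAction k D (dualContraaction k D ρ) f (dAction k D (dualContraaction k D ρ) g q) =
      dAction k D (dualContraaction k D ρ) (convD k D g f) q := by
  have A' : (ctr k g) ∘ₗ (ctr k f : (L ⊗[k] D) ⊗[k] D →ₗ[k] L ⊗[k] D) =
      (ctr k (TensorProduct.lift (g.smulRight f))) ∘ₗ
        (TensorProduct.assoc k L D D).toLinearMap := by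
    apply TensorProduct.ext_threefold
    intro x d e
    simp [smul_smul, mul_comm]
  have B' : ctr k (convD k D g f) =
      (ctr k (TensorProduct.lift (g.smulRight f))) ∘ₗ
        (CoalgebraStruct.comul (R := k) (A := D)).lTensor L := by
    apply TensorProduct.ext'
    intro x d
    simp [convD]
  ext x
  rw [dAction_dual_apply, dAction_dual_apply, dAction_dual_apply]
  congr 1
  -- `ρ (ctr k f (ρ x)) = ctr k f ((ρ.rTensor D) (ρ x))`
  have h1 : ρ (ctr k f (ρ x)) = ctr k f ((ρ.rTensor D) (ρ x)) :=
    (LinearMap.congr_fun (ctr_naturality k ρ f) (ρ x)).symm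
  have h2 : (ρ.rTensor D) (ρ x) = (TensorProduct.assoc k L D D).symm
      ((CoalgebraStruct.comul (R := k) (A := D)).lTensor L (ρ x)) := by
    rw [LinearEquiv.eq_symm_apply]
    exact hρ.coassoc x
  rw [h1, h2]
  have h3 := LinearMap.congr_fun A'
    ((TensorProduct.assoc k L D D).symm
      ((CoalgebraStruct.comul (R := k) (A := D)).lTensor L (ρ x)))
  simp only [LinearMap.comp_apply, LinearEquiv.coe_coe] at h3
  rw [h3, LinearEquiv.apply_symm_apply]
  have h4 := LinearMap.congr_fun B' (ρ x)
  simp only [LinearMap.comp_apply] at h4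
  rw [h4]

lemma isDStar_dspan_dual (hρ : IsRightComod k D ρ) (q : L →ₗ[k] k) :
    IsDStarSubmodule k D (dualContraaction k D ρ) (dspan k D (dualContraaction k D ρ) q) := by
  intro f p hp
  obtain ⟨g, rfl⟩ := (mem_dspan_iff k D _ q p).1 hp
  rw [dAction_dual_dAction k D ρ hρ]
  exact dAction_mem_dspan k D _ q _

/-- The comodule morphism `L → D` given by contracting with `q`. -/
noncomputable def thetaMap (q : L →ₗ[k] k) : L →ₗ[k] D :=
  (TensorProduct.lid k D).toLinearMap ∘ₗ (q.rTensor D) ∘ₗ ρ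

lemma dAction_dual_theta (f : D →ₗ[k] k) (q : L →ₗ[k] k) :
    dAction k D (dualContraaction k D ρ) f q = f ∘ₗ thetaMap k D ρ q := by
  have E : q ∘ₗ (ctr k f : L ⊗[k] D →ₗ[k] L) =
      f ∘ₗ (TensorProduct.lid k D).toLinearMap ∘ₗ (q.rTensor D) := by
    apply TensorProduct.ext'
    intro x d
    simp [mul_comm]
  ext x
  rw [dAction_dual_apply]
  have := LinearMap.congr_fun E (ρ x)
  simp only [LinearMap.comp_apply, LinearEquiv.coe_coe] at this
  exact this

lemma dspan_dual_eq_annihilator (q : L →ₗ[k] k) :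
    dspan k D (dualContraaction k D ρ) q = (LinearMap.ker (thetaMap k D ρ q)).dualAnnihilator := by
  apply le_antisymm
  · intro x hx
    obtain ⟨f, rfl⟩ := (mem_dspan_iff k D _ q x).1 hx
    rw [Submodule.mem_dualAnnihilator]
    intro w hw
    rw [dAction_dual_theta]
    simp only [LinearMap.comp_apply]
    rw [LinearMap.mem_ker.1 hw, map_zero]
  · intro h hh
    rw [Submodule.mem_dualAnnihilator] at hh
    have hker : LinearMap.ker (thetaMap k D ρ q) ≤ LinearMap.ker h := fun w hw =>
      LinearMap.mem_ker.2 (hh w hw)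
    set θ := thetaMap k D ρ q with hθ
    set hbar := (LinearMap.ker θ).liftQ h hker with hhbar
    set f₀ : LinearMap.range θ →ₗ[k] k := hbar ∘ₗ (θ.quotKerEquivRange.symm : _ →ₗ[k] _)
      with hf₀
    obtain ⟨f, hf⟩ := LinearMap.exists_extend f₀
    refine (mem_dspan_iff k D _ q h).2 ⟨f, ?_⟩
    rw [dAction_dual_theta]
    ext x
    simp only [LinearMap.comp_apply]
    have e1 : θ x = (LinearMap.range θ).subtype ⟨θ x, LinearMap.mem_range_self θ x⟩ := rfl
    rw [e1, ← LinearMap.comp_apply f, hf]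
    have e2 : θ.quotKerEquivRange.symm ⟨θ x, LinearMap.mem_range_self θ x⟩ =
        Submodule.Quotient.mk x := by
      rw [LinearEquiv.symm_apply_eq]
      exact Subtype.ext (θ.quotKerEquivRange_apply_mk x).symm
    rw [hf₀]
    simp only [LinearMap.comp_apply, LinearEquiv.coe_coe]
    rw [e2, hhbar]
    exact Submodule.liftQ_apply _ h x

lemma spanD_dual_closed (s : Finset (L →ₗ[k] k)) :
    ∃ K : Submodule k L, spanD k D (dualContraaction k D ρ) s = K.dualAnnihilator := by
  classical
  induction s using Finset.induction_on with
  | empty =>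
      refine ⟨⊤, ?_⟩
      simp [spanD, Submodule.dualAnnihilator_top]
  | insert a t hx ih =>
      obtain ⟨K, hK⟩ := ih
      refine ⟨LinearMap.ker (thetaMap k D ρ a) ⊓ K, ?_⟩
      rw [Subspace.dualAnnihilator_inf_eq]
      show (insert a t).sup _ = _
      rw [Finset.sup_insert]
      show dspan k D (dualContraaction k D ρ) a ⊔ spanD k D (dualContraaction k D ρ) t = _
      rw [hK, dspan_dual_eq_annihilator]

lemma dualCoannihilator_anti {Q₁ Q₂ : Submodule k (L →ₗ[k] k)} (h : Q₁ ≤ Q₂) :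
    Q₂.dualCoannihilator ≤ Q₁.dualCoannihilator := by
  intro x hx
  rw [Submodule.mem_dualCoannihilator] at hx ⊢
  exact fun q hq => hx q (h hq)

lemma dualAnnihilator_anti {N₁ N₂ : Submodule k L} (h : N₁ ≤ N₂) :
    N₂.dualAnnihilator ≤ N₁.dualAnnihilator := by
  intro q hq
  rw [Submodule.mem_dualAnnihilator] at hq ⊢
  exact fun w hw => hq w (h hw)

/-- ACC for `D*`-submodule chains in a Noetherian `D*`-module. -/
lemma acc_of_noethDStar {P : Type} [AddCommGroup P] [Module k P]
    (π : (D →ₗ[k] P) →ₗ[k] P) (hN : NoetherianDStarModule k D π)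
    (Q : ℕ → Submodule k P) (hQ : ∀ n, IsDStarSubmodule k D π (Q n))
    (hmono' : ∀ n, Q n ≤ Q (n + 1)) : ∃ n, ∀ m, n ≤ m → Q m = Q n := by
  have hmono : Monotone Q := monotone_nat_of_le_succ hmono'
  have hdir : Directed (· ≤ ·) Q := hmono.directed_le
  have hmem : ∀ x, x ∈ (⨆ n, Q n) ↔ ∃ n, x ∈ Q n :=
    fun x => Submodule.mem_iSup_of_directed Q hdir
  have hDsup : IsDStarSubmodule k D π (⨆ n, Q n) := by
    intro g p hp
    obtain ⟨n, hn⟩ := (hmem p).1 hp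
    exact (hmem _).2 ⟨n, hQ n g p hn⟩
  obtain ⟨s, hsQ, hmin⟩ := hN _ hDsup
  obtain ⟨N, hsN⟩ := finset_subset_chain k Q hmono s (fun p hp => (hmem p).1 (hsQ hp))
  refine ⟨N, fun m hm => le_antisymm ?_ (hmono hm)⟩
  calc Q m ≤ ⨆ n, Q n := le_iSup Q m
    _ ≤ Q N := hmin (Q N) (hQ N) hsN

/-- Part (b), ⇒. -/
lemma noethDStar_of_artinian (hρ : IsRightComod k D ρ) (hA : ArtinianRight k D ρ) :
    NoetherianDStarModule k D (dualContraaction k D ρ) := by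
  intro Q hQ
  by_contra hnfg
  obtain ⟨g, hgQ, hgmono, hgnew⟩ := chain_of_not_fg k D _ Q hnfg
  set C : ℕ → Submodule k L :=
    fun n => (spanD k D (dualContraaction k D ρ) (g n)).dualCoannihilator with hC
  have hsub : ∀ n, IsSubcomodRight k D ρ (C n) := fun n =>
    isSubcomod_dualCoannihilator k D ρ
      (isDStar_spanD k D _ (fun p => isDStar_dspan_dual k D ρ hρ p) (g n))
  have hdesc : ∀ n, C (n + 1) ≤ C n := fun n =>
    dualCoannihilator_anti k (spanD_mono k D _ (hgmono n))
  obtain ⟨n, hn⟩ := hA C hsub hdesc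
  obtain ⟨p, hp1, hp2⟩ := hgnew n
  apply hp2
  obtain ⟨K1, hK1⟩ := spanD_dual_closed k D ρ (g (n + 1))
  obtain ⟨K2, hK2⟩ := spanD_dual_closed k D ρ (g n)
  have hstab : spanD k D (dualContraaction k D ρ) (g (n + 1)) =
      spanD k D (dualContraaction k D ρ) (g n) := by
    have e1 : spanD k D (dualContraaction k D ρ) (g (n + 1)) = (C (n + 1)).dualAnnihilator := by
      show _ = ((spanD k D (dualContraaction k D ρ) (g (n + 1))).dualCoannihilator).dualAnnihilator
      rw [hK1, Submodule.dualAnnihilator_dualCoannihilator_dualAnnihilator]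
    have e2 : spanD k D (dualContraaction k D ρ) (g n) = (C n).dualAnnihilator := by
      show _ = ((spanD k D (dualContraaction k D ρ) (g n)).dualCoannihilator).dualAnnihilator
      rw [hK2, Submodule.dualAnnihilator_dualCoannihilator_dualAnnihilator]
    rw [e1, e2, hn (n + 1) (Nat.le_succ n)]
  rw [← hstab]
  exact subset_spanD k D _ (fun p => dAction_dual_counit k D ρ hρ p) (g (n + 1)) hp1

/-- Part (b), ⇐. -/
lemma artinian_of_noethDStar (hN : NoetherianDStarModule k D (dualContraaction k D ρ)) :
    ArtinianRight k D ρ := by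
  intro f hsub hdesc
  set Q : ℕ → Submodule k (L →ₗ[k] k) := fun n => (f n).dualAnnihilator with hQdef
  have hQstar : ∀ n, IsDStarSubmodule k D (dualContraaction k D ρ) (Q n) :=
    fun n => isDStar_dualAnnihilator k D ρ (hsub n)
  have hmono : ∀ n, Q n ≤ Q (n + 1) := fun n => dualAnnihilator_anti k (hdesc n)
  obtain ⟨N, hst⟩ := acc_of_noethDStar k D _ hN Q hQstar hmono
  refine ⟨N, fun m hm => ?_⟩
  have : (Q m).dualCoannihilator = (Q N).dualCoannihilator := by rw [hst m hm]
  rwa [hQdef, Subspace.dualAnnihilator_dualCoannihilator_eq,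
    Subspace.dualAnnihilator_dualCoannihilator_eq] at this

end Aux5


section Aux6

variable (k : Type) [Field k]
variable (D : Type) [AddCommGroup D] [Module k D] [Coalgebra k D]
variable {L : Type} [AddCommGroup L] [Module k L] (ρ : L →ₗ[k] L ⊗[k] D)

/-- Corestriction of a linear map to a comodule morphism into the cofree comodule. -/
lemma isRightComodHom_corest {V : Type} [AddCommGroup V] [Module k V]
    (hρ : IsRightComod k D ρ) (ℓ : L →ₗ[k] V) :
    IsRightComodHom k D ρ (cofreeRightCoaction k D V) ((ℓ.rTensor D) ∘ₗ ρ) := by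
  set g := (ℓ.rTensor D) ∘ₗ ρ with hg
  have E' : (TensorProduct.assoc k V D D).toLinearMap ∘ₗ ((ℓ.rTensor D).rTensor D) =
      (ℓ.rTensor (D ⊗[k] D)) ∘ₗ (TensorProduct.assoc k L D D).toLinearMap := by
    apply TensorProduct.ext_threefold
    intro x d e
    simp
  have E2 : (ℓ.rTensor (D ⊗[k] D)) ∘ₗ
      ((CoalgebraStruct.comul (R := k) (A := D)).lTensor L) =
      ((CoalgebraStruct.comul (R := k) (A := D)).lTensor V) ∘ₗ (ℓ.rTensor D) := by
    rw [LinearMap.rTensor_comp_lTensor, LinearMap.lTensor_comp_rTensor]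
  apply LinearMap.ext
  intro x
  show (g.rTensor D) (ρ x) = cofreeRightCoaction k D V (g x)
  have hgr : g.rTensor D = ((ℓ.rTensor D).rTensor D) ∘ₗ (ρ.rTensor D) := by
    rw [hg, LinearMap.rTensor_comp]
  have key : (TensorProduct.assoc k V D D)
      (((ℓ.rTensor D).rTensor D) ((ρ.rTensor D) (ρ x))) =
      (CoalgebraStruct.comul (R := k) (A := D)).lTensor V ((ℓ.rTensor D) (ρ x)) := by
    have h1 := LinearMap.congr_fun E' ((ρ.rTensor D) (ρ x))
    simp only [LinearMap.comp_apply, LinearEquiv.coe_coe] at h1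
    rw [h1, hρ.coassoc x]
    have h2 := LinearMap.congr_fun E2 (ρ x)
    simp only [LinearMap.comp_apply] at h2
    rw [h2]
  rw [hgr]
  show ((ℓ.rTensor D).rTensor D) ((ρ.rTensor D) (ρ x)) = _
  rw [← LinearEquiv.symm_apply_apply (TensorProduct.assoc k V D D)
    (((ℓ.rTensor D).rTensor D) ((ρ.rTensor D) (ρ x))), key]
  rfl

/-- The `D*`-action on the free contramodule applied to counit-generators. -/
lemma dAction_free {V : Type} [AddCommGroup V] [Module k V] (f : D →ₗ[k] k) (v : V) :
    dAction k D (freeContraaction k D V) f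
      ((CoalgebraStruct.counit (R := k) (A := D)).smulRight v) = f.smulRight v := by
  have E : TensorProduct.uncurry (RingHom.id k) D D V
      (f.smulRight ((CoalgebraStruct.counit (R := k) (A := D)).smulRight v)) =
      (TensorProduct.lift (f.smulRight (CoalgebraStruct.counit (R := k) (A := D)))).smulRight
        v := by
    apply TensorProduct.ext'
    intro d e
    simp [smul_smul]
  have E2 : TensorProduct.lift (f.smulRight (CoalgebraStruct.counit (R := k) (A := D))) =
      f ∘ₗ (ctr k (CoalgebraStruct.counit (R := k) (A := D)) : D ⊗[k] D →ₗ[k] D) := by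
    apply TensorProduct.ext'
    intro d e
    simp [mul_comm]
  have E3 : ∀ d : D, ctr k (CoalgebraStruct.counit (R := k) (A := D))
      (CoalgebraStruct.comul (R := k) (A := D) d) = d := by
    intro d
    have h := LinearMap.congr_fun (Coalgebra.lTensor_counit_comp_comul (R := k) (A := D)) d
    simp only [LinearMap.comp_apply] at h
    show (TensorProduct.rid k D)
      ((CoalgebraStruct.counit (R := k) (A := D)).lTensor D
        (CoalgebraStruct.comul (R := k) (A := D) d)) = d
    rw [h]
    simp
  ext d
  show TensorProduct.uncurry (RingHom.id k) D D V
    (f.smulRight ((CoalgebraStruct.counit (R := k) (A := D)).smulRight v))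
      (CoalgebraStruct.comul (R := k) (A := D) d) = f d • v
  rw [E]
  simp only [LinearMap.smulRight_apply]
  rw [LinearMap.congr_fun E2 (CoalgebraStruct.comul (R := k) (A := D) d)]
  simp only [LinearMap.comp_apply]
  rw [E3]

/-- Part (c). -/
lemma coNoetherian_of_noethContra (hρ : IsRightComod k D ρ)
    (hN : NoetherianContra k D (dualContraaction k D ρ)) : CoNoetherianRight k D ρ := by
  classical
  intro N' hN'
  obtain ⟨π', hcompat, V, aV, mV, hfd, G, hGsurj, hGhom⟩ :=
    hN (N'.dualAnnihilator) (isSubcontra_dualAnnihilator k D ρ hN')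
  set n := Module.finrank k V with hn
  set b := Module.finBasis k V with hb
  set qv : Fin n → ↥(N'.dualAnnihilator) :=
    fun i => G ((CoalgebraStruct.counit (R := k) (A := D)).smulRight (b i)) with hqv
  set q : Fin n → (L →ₗ[k] k) := fun i => (qv i : L →ₗ[k] k) with hq
  have key1 : ∀ (f : D →ₗ[k] k) (i : Fin n),
      ((G (f.smulRight (b i)) : ↥(N'.dualAnnihilator)) : L →ₗ[k] k) =
        dAction k D (dualContraaction k D ρ) f (q i) := by
    intro f i
    have h0 : f.smulRight (b i) = freeContraaction k D V
        (f.smulRight ((CoalgebraStruct.counit (R := k) (A := D)).smulRight (b i))) :=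
      (dAction_free k D f (b i)).symm
    rw [h0, hGhom]
    have h1 : G ∘ₗ (f.smulRight ((CoalgebraStruct.counit (R := k) (A := D)).smulRight (b i))) =
        f.smulRight (qv i) := by
      ext d
      simp [hqv]
    rw [h1, hcompat (f.smulRight (qv i))]
    show dualContraaction k D ρ ((N'.dualAnnihilator).subtype ∘ₗ f.smulRight (qv i)) = _
    rw [dAction_def]
    congr 1
  have key2 : ∀ y : ↥(N'.dualAnnihilator), ∃ F : Fin n → (D →ₗ[k] k),
      (y : L →ₗ[k] k) = ∑ i, dAction k D (dualContraaction k D ρ) (F i) (q i) := by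
    intro y
    obtain ⟨h, rfl⟩ := hGsurj y
    refine ⟨fun i => (b.coord i) ∘ₗ h, ?_⟩
    have hdecomp : h = ∑ i, ((b.coord i) ∘ₗ h).smulRight (b i) := by
      ext d
      rw [LinearMap.sum_apply]
      simp only [LinearMap.smulRight_apply, LinearMap.comp_apply, Module.Basis.coord_apply]
      exact (b.sum_repr (h d)).symm
    calc ((G h : ↥(N'.dualAnnihilator)) : L →ₗ[k] k)
        = ((G (∑ i, ((b.coord i) ∘ₗ h).smulRight (b i)) : ↥(N'.dualAnnihilator)) : L →ₗ[k] k) :=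
          by rw [← hdecomp]
      _ = ((∑ i, G (((b.coord i) ∘ₗ h).smulRight (b i)) : ↥(N'.dualAnnihilator)) : L →ₗ[k] k) :=
          by rw [map_sum]
      _ = ∑ i, ((G (((b.coord i) ∘ₗ h).smulRight (b i)) : ↥(N'.dualAnnihilator)) : L →ₗ[k] k) :=
          by exact map_sum (N'.dualAnnihilator).subtype _ Finset.univ
      _ = ∑ i, dAction k D (dualContraaction k D ρ) ((b.coord i) ∘ₗ h) (q i) := by
          refine Finset.sum_congr rfl fun i _ => key1 _ i
  set ℓ : L →ₗ[k] (Fin n → k) := LinearMap.pi q with hℓ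
  refine ⟨Fin n → k, inferInstance, inferInstance, inferInstance,
    (ℓ.rTensor D) ∘ₗ ρ, isRightComodHom_corest k D ρ hρ ℓ, ?_⟩
  ext x
  rw [LinearMap.mem_ker]
  constructor
  · intro hx
    -- show x ∈ N'
    rw [← Subspace.dualAnnihilator_dualCoannihilator_eq (W := N')]
    rw [Submodule.mem_dualCoannihilator]
    intro φ hφ
    obtain ⟨F, hF⟩ := key2 ⟨φ, hφ⟩
    show φ x = 0
    have hφx : φ x = ∑ i, dAction k D (dualContraaction k D ρ) (F i) (q i) x := by
      rw [show φ = ((⟨φ, hφ⟩ : ↥(N'.dualAnnihilator)) : L →ₗ[k] k) from rfl, hF]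
      rw [LinearMap.sum_apply]
    rw [hφx]
    apply Finset.sum_eq_zero
    intro i _
    rw [dAction_dual_apply]
    have hc : ctr k (F i) ((ℓ.rTensor D) (ρ x)) = ℓ (ctr k (F i) (ρ x)) := by
      have := LinearMap.congr_fun (ctr_naturality k ℓ (F i)) (ρ x)
      simpa using this
    have : ℓ (ctr k (F i) (ρ x)) = 0 := by
      rw [← hc]
      show ctr k (F i) (((ℓ.rTensor D) ∘ₗ ρ) x) = 0
      rw [hx, map_zero]
    have hcomp := congrFun this i
    simpa [hℓ] using hcomp
  · intro hx
    apply eq_zero_of_ctr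
    intro f
    have hc : ctr k f (((ℓ.rTensor D) ∘ₗ ρ) x) = ℓ (ctr k f (ρ x)) := by
      have := LinearMap.congr_fun (ctr_naturality k ℓ f) (ρ x)
      simpa using this
    rw [hc]
    ext i
    show q i (ctr k f (ρ x)) = 0
    rw [← dAction_dual_apply]
    have hmem : dAction k D (dualContraaction k D ρ) f (q i) ∈ N'.dualAnnihilator :=
      isDStar_dualAnnihilator k D ρ hN' f (q i) (qv i).2
    rw [Submodule.mem_dualAnnihilator] at hmem
    exact hmem x hx

end Aux6

/-- Lemma 1.10: (a) a left `D`-contramodule is co-Artinian if and only if its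
underlying left `D*`-module is Noetherian; (b) a right `D`-comodule `L` is Artinian
if and only if the dual vector space `L*` is a Noetherian left `D*`-module;
(c) a right `D`-comodule `L` is co-Noetherian provided that its dual vector space
`L*` is a Noetherian left `D`-contramodule. -/
theorem coArtinian_iff_dual_noetherian
    (k : Type) [Field k]
    (D : Type) [AddCommGroup D] [Module k D] [Coalgebra k D] :
    (∀ (P : Type) (_ : AddCommGroup P) (_ : Module k P)
      (π : (D →ₗ[k] P) →ₗ[k] P), IsContra k D π →
        (CoArtinianContra k D π ↔ NoetherianDStarModule k D π)) ∧
    (∀ (L : Type) (_ : AddCommGroup L) (_ : Module k L)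
      (ρ : L →ₗ[k] L ⊗[k] D), IsRightComod k D ρ →
        (ArtinianRight k D ρ ↔ NoetherianDStarModule k D (dualContraaction k D ρ))) ∧
    (∀ (L : Type) (_ : AddCommGroup L) (_ : Module k L)
      (ρ : L →ₗ[k] L ⊗[k] D), IsRightComod k D ρ →
        NoetherianContra k D (dualContraaction k D ρ) → CoNoetherianRight k D ρ) := by
  refine ⟨?_, ?_, ?_⟩
  · intro P _ _ π hπ
    exact ⟨noeth_of_coArtinian k D π hπ, coArtinian_of_noeth k D π⟩
  · intro L _ _ ρ hρ
    exact ⟨noethDStar_of_artinian k D ρ hρ, artinian_of_noethDStar k D ρ⟩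
  · intro L _ _ ρ hρ hNC
    exact coNoetherian_of_noethContra k D ρ hρ hNC
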